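/- For m ≥ 1, let h_{2m}(k) = (1 − k^{2m−1})/(1 − k^{2m}) and c_{2m,2} the unique root of k^{2m}+k^{2m−1}−2 in [−2, c_{2m,1}). Then |h_{2m}'(k)| > 1 for all k in (c_{2m,2}, −1) (for m > 1 one even has |h_{2m}'(k)| > 1 + 1/(2^{2m}−1)²); consequently, any orbit of h_{2m} cannot remain in (c_{2m,2}, c_{2m,1}) ∪ (c_{2m,1}, −1) forever: there exists an index ℓ with k_ℓ outside this set. -/

import Mathlib

open Set

private lemma deriv_h2m_aux (m : ℕ) (hm : 1 ≤ m) (k : ℝ) (hk : 1 - k ^ (2*m) ≠ 0) :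
    deriv (fun t : ℝ => (1 - t ^ (2*m-1)) / (1 - t ^ (2*m))) k =
      (2*m*k^(2*m-1) - (2*m-1)*k^(2*m-2) - k^(4*m-2)) / (1 - k^(2*m))^2 := by
  have h1 : HasDerivAt (fun t : ℝ => 1 - t ^ (2*m-1)) (-((2*m-1 : ℝ) * k^(2*m-2))) k := by
    have h := (hasDerivAt_pow (2*m-1) k).const_sub 1
    rw [show 2*m-1-1 = 2*m-2 from by omega] at h
    refine h.congr_deriv ?_
    push_cast [Nat.cast_sub (show 1 ≤ 2*m by omega)]; ring
  have h2 : HasDerivAt (fun t : ℝ => 1 - t ^ (2*m)) (-((2*m : ℝ) * k^(2*m-1))) k := by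
    have h := (hasDerivAt_pow (2*m) k).const_sub 1
    refine h.congr_deriv ?_
    push_cast; ring
  rw [show (fun t : ℝ => (1 - t^(2*m-1))/(1 - t^(2*m))) = (fun t : ℝ => 1 - t^(2*m-1)) / (fun t : ℝ => 1 - t^(2*m)) from rfl, (h1.div h2 hk).deriv]
  have e1 : k^(2*m-2) * k^(2*m) = k^(4*m-2) := by rw [← pow_add]; congr 1; omega
  have e2 : k^(2*m-1) * k^(2*m-1) = k^(4*m-2) := by rw [← pow_add]; congr 1; omega
  congr 1
  linear_combination (2*(m:ℝ)-1) * e1 - 2*(m:ℝ) * e2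

private lemma E_bound_aux (m : ℕ) (hm : 1 ≤ m) (s s2 : ℝ) (hs1 : 1 < s) (hss2 : s < s2)
    (hs22 : s2 ≤ 2) (hroot : s2^(2*m) - s2^(2*m-1) = 2) :
    4*(m:ℝ) - 4 < 2*m * s^(2*m-1) + (2*m-1) * s^(2*m-2) + s^(4*m-2) - (s^(2*m) - 1)^2 := by
  set A := s^(2*m-1) with hAdef
  set B := s^(2*m-2) with hBdef
  have hA : s^(2*m) = A * s := by rw [hAdef, ← pow_succ]; congr 1; omega
  have hA2 : s^(4*m-2) = A^2 := by rw [hAdef, ← pow_mul]; congr 1; omega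
  have hA1 : 1 < A := one_lt_pow₀ hs1 (by omega)
  have hB1 : 1 ≤ B := one_le_pow₀ (le_of_lt hs1)
  have hC2 : s2^(2*m) = s2^(2*m-1) * s2 := by rw [← pow_succ]; congr 1; omega
  have hkey : A * (s - 1) < 2 := by
    have h1 : A < s2^(2*m-1) := pow_lt_pow_left₀ hss2 (by linarith) (by omega)
    have h2 : s2^(2*m-1) * (s2 - 1) = 2 := by rw [mul_sub]; rw [← hC2]; linarith [hroot]
    nlinarith [mul_lt_mul_of_pos_right h1 (show (0:ℝ) < s - 1 by linarith),
      mul_lt_mul_of_pos_left (show s - 1 < s2 - 1 by linarith)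
        (show (0:ℝ) < s2^(2*m-1) by nlinarith)]
  rw [hA, hA2]
  have h₁ : (2 - A*(s-1)) * (A*(s+1)) > 0 :=
    mul_pos (by linarith) (by nlinarith)
  have h₂ : ((m:ℝ)-1)*(A-1) ≥ 0 := by
    have : (1:ℝ) ≤ (m:ℝ) := by exact_mod_cast hm
    nlinarith
  have h₃ : (2*(m:ℝ)-1)*(B-1) ≥ 0 := by
    have : (1:ℝ) ≤ (m:ℝ) := by exact_mod_cast hm
    nlinarith
  nlinarith [h₁, h₂, h₃]

private lemma deriv_lower_aux (m : ℕ) (hm : 1 ≤ m) (c2 : ℝ) (h2le : -2 ≤ c2)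
    (hroot : c2 ^ (2*m) + c2 ^ (2*m-1) - 2 = 0) (k : ℝ) (hk : k ∈ Set.Ioo c2 (-1 : ℝ)) :
    1 + (4*(m:ℝ) - 4) / ((2:ℝ)^(2*m) - 1)^2 <
      |deriv (fun t : ℝ => (1 - t ^ (2*m-1)) / (1 - t ^ (2*m))) k| := by
  obtain ⟨hk1, hk2⟩ := hk
  set s : ℝ := -k with hs
  set s2 : ℝ := -c2 with hs2
  have hks : k = -s := by rw [hs]; ring
  have hc2s : c2 = -s2 := by rw [hs2]; ring
  have hs1 : 1 < s := by simp [hs]; linarith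
  have hss2 : s < s2 := by rw [hs, hs2]; linarith
  have hs22 : s2 ≤ 2 := by rw [hs2]; linarith
  have hev : Even (2*m) := ⟨m, by ring⟩
  have hod : Odd (2*m-1) := ⟨m-1, by omega⟩
  have hev2 : Even (2*m-2) := ⟨m-1, by omega⟩
  have hev4 : Even (4*m-2) := ⟨2*m-1, by omega⟩
  have hk2m : k^(2*m) = s^(2*m) := by rw [hks, hev.neg_pow]
  have hk2m1 : k^(2*m-1) = -s^(2*m-1) := by rw [hks, hod.neg_pow]
  have hk2m2 : k^(2*m-2) = s^(2*m-2) := by rw [hks, hev2.neg_pow]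
  have hk4m2 : k^(4*m-2) = s^(4*m-2) := by rw [hks, hev4.neg_pow]
  have hroot' : s2^(2*m) - s2^(2*m-1) = 2 := by
    rw [hc2s, hev.neg_pow, hod.neg_pow] at hroot; linarith
  have hEb := E_bound_aux m hm s s2 hs1 hss2 hs22 hroot'
  have hP1 : 1 < s^(2*m) := one_lt_pow₀ hs1 (by omega)
  have hsQ : s^(2*m) < 2^(2*m) := pow_lt_pow_left₀ (by linarith) (by linarith) (by omega)
  have hknz : 1 - k^(2*m) ≠ 0 := by rw [hk2m]; intro h; nlinarith
  rw [deriv_h2m_aux m hm k hknz]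
  set N : ℝ := 2*m * s^(2*m-1) + (2*m-1) * s^(2*m-2) + s^(4*m-2) with hN
  have hnum : 2*(m:ℝ)*k^(2*m-1) - (2*m-1)*k^(2*m-2) - k^(4*m-2) = -N := by
    rw [hk2m1, hk2m2, hk4m2, hN]; ring
  have hden : (1 - k^(2*m))^2 = (s^(2*m) - 1)^2 := by rw [hk2m]; ring
  set P : ℝ := s^(2*m) - 1 with hPdef
  set Q : ℝ := (2:ℝ)^(2*m) - 1 with hQdef
  have hPpos : 0 < P := by rw [hPdef]; linarith
  have hPQ : P < Q := by rw [hPdef, hQdef]; linarith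
  have habs : N / P^2 ≤
      |(2*↑m*k^(2*m-1) - (2*↑m-1)*k^(2*m-2) - k^(4*m-2)) / (1 - k^(2*m))^2| := by
    have : (2*(m:ℝ)*k^(2*m-1) - (2*↑m-1)*k^(2*m-2) - k^(4*m-2)) / (1 - k^(2*m))^2
        = -(N / P^2) := by rw [hden, hnum]; ring
    rw [this, abs_neg]
    exact le_abs_self _
  refine lt_of_lt_of_le ?_ habs
  have hm1 : (1:ℝ) ≤ (m:ℝ) := by exact_mod_cast hm
  have hsplit : N / P^2 = 1 + (N - P^2)/P^2 := by field_simp; ring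
  rw [hsplit]
  apply add_lt_add_right
  rw [div_lt_div_iff₀ (pow_pos (lt_trans hPpos hPQ) 2) (pow_pos hPpos 2)]
  nlinarith [sq_nonneg P, sq_nonneg Q, mul_pos hPpos hPpos,
    mul_lt_mul_of_pos_left hPQ hPpos, mul_lt_mul_of_pos_right hPQ (lt_trans hPpos hPQ)]

private lemma diff_h2m_aux (m : ℕ) (hm : 1 ≤ m) (t : ℝ) (ht : t < -1) :
    DifferentiableAt ℝ (fun t : ℝ => (1 - t^(2*m-1))/(1 - t^(2*m))) t := by
  have h2 : 1 < t^(2*m) := by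
    rw [pow_mul]; exact one_lt_pow₀ (by nlinarith) (by omega)
  exact DifferentiableAt.div (by fun_prop) (by fun_prop)
    (ne_of_lt (show 1 - t^(2*m) < 0 by linarith))

private lemma fix_c1_aux (m : ℕ) (hm : 1 ≤ m) (c1 : ℝ) (hc1a : c1 < -1)
    (hroot : c1^(2*m) + c1^(2*m-1) - 1 = 0) :
    (1 - c1^(2*m-1)) / (1 - c1^(2*m)) = c1 := by
  have h1 : c1^(2*m-1) ≠ 0 := pow_ne_zero _ (by linarith)
  rw [show (1:ℝ) - c1^(2*m-1) = c1^(2*m) by linarith,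
    show (1:ℝ) - c1^(2*m) = c1^(2*m-1) by linarith,
    show 2*m = (2*m-1)+1 from by omega, pow_succ]
  exact mul_div_cancel_left₀ _ h1

private lemma mvt_core_aux (m : ℕ) (hm : 1 ≤ m) (c2 : ℝ) (h2le : -2 ≤ c2)
    (hroot : c2^(2*m) + c2^(2*m-1) - 2 = 0) (a b : ℝ) (hab : a < b) (ha : c2 < a)
    (hb : b < -1) :
    (1 + (4*(m:ℝ)-4)/((2:ℝ)^(2*m)-1)^2) * (b - a) ≤
      |(1 - b^(2*m-1))/(1 - b^(2*m)) - (1 - a^(2*m-1))/(1 - a^(2*m))| := by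
  set f : ℝ → ℝ := fun t => (1 - t^(2*m-1))/(1 - t^(2*m)) with hf
  have hcont : ContinuousOn f (Icc a b) := fun t ht =>
    ((diff_h2m_aux m hm t (lt_of_le_of_lt ht.2 hb)).continuousAt).continuousWithinAt
  have hdiff : DifferentiableOn ℝ f (Ioo a b) := fun t ht =>
    (diff_h2m_aux m hm t (ht.2.trans hb)).differentiableWithinAt
  obtain ⟨ξ, hξ, hd⟩ := exists_deriv_eq_slope f hab hcont hdiff
  have hξmem : ξ ∈ Ioo c2 (-1:ℝ) := ⟨ha.trans hξ.1, hξ.2.trans hb⟩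
  have hlow := deriv_lower_aux m hm c2 h2le hroot ξ hξmem
  rw [hf] at hd
  rw [hd, abs_div, abs_of_pos (show (0:ℝ) < b - a by linarith)] at hlow
  have hba : (0:ℝ) < b - a := by linarith
  calc (1 + (4*(m:ℝ)-4)/((2:ℝ)^(2*m)-1)^2) * (b - a)
      ≤ (|f b - f a|/(b-a)) * (b - a) := mul_le_mul_of_nonneg_right hlow.le hba.le
    _ = |f b - f a| := div_mul_cancel₀ _ (ne_of_gt hba)

private lemma mvt_step_aux (m : ℕ) (hm : 1 ≤ m) (c2 c1 : ℝ) (h2le : -2 ≤ c2)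
    (hroot2 : c2^(2*m) + c2^(2*m-1) - 2 = 0) (hc1mem : c1 ∈ Ioo c2 (-1:ℝ))
    (hroot1 : c1^(2*m) + c1^(2*m-1) - 1 = 0) (x : ℝ) (hx : x ∈ Ioo c2 (-1:ℝ))
    (hxne : x ≠ c1) :
    (1 + (4*(m:ℝ)-4)/((2:ℝ)^(2*m)-1)^2) * |x - c1| ≤
      |(1 - x^(2*m-1))/(1 - x^(2*m)) - c1| := by
  have hfix := fix_c1_aux m hm c1 hc1mem.2 hroot1
  rcases lt_or_gt_of_ne hxne with h | h
  · have hcore := mvt_core_aux m hm c2 h2le hroot2 x c1 h hx.1 hc1mem.2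
    rw [hfix, abs_sub_comm] at hcore
    rwa [abs_of_neg (show x - c1 < 0 by linarith), neg_sub]
  · have hcore := mvt_core_aux m hm c2 h2le hroot2 c1 x h hc1mem.1 hx.2
    rw [hfix] at hcore
    rwa [abs_of_pos (show (0:ℝ) < x - c1 by linarith)]

private lemma mobius_u_aux (c0 c1 x y : ℝ) (h0 : c0^2 + c0 - 1 = 0) (h1 : c1^2 + c1 - 1 = 0)
    (hx : 1 + x ≠ 0) (hy : y * (1 + x) = 1) (hxc0 : x - c0 ≠ 0) (hyc0 : y - c0 ≠ 0)
    (hc0 : c0 ≠ 0) :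
    (y - c1)/(y - c0) = (c1/c0) * ((x - c1)/(x - c0)) := by
  have e1 : 1 - c1*(1+x) = c1*(c1 - x) := by linear_combination -h1
  have e0 : 1 - c0*(1+x) = c0*(c0 - x) := by linear_combination -h0
  have key1 : ((y - c1) * (c0 * (x - c0))) * (1+x) = ((c1 * (x - c1)) * (y - c0)) * (1+x) := by
    linear_combination (c0*(x-c0) - c1*(x-c1)) * hy + (c0*(x-c0)) * e1 - (c1*(x-c1)) * e0
  have key := mul_right_cancel₀ hx key1
  rw [div_mul_div_comm, div_eq_div_iff hyc0 (mul_ne_zero hc0 hxc0)]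
  linear_combination key

theorem h2m_expanding_orbit_escapes (m : ℕ) (hm : 1 ≤ m)
    (c0 : ℝ) (hc0 : c0 ∈ Set.Ioo (0 : ℝ) 1)
    (hc0root : c0 ^ (2 * m) + c0 ^ (2 * m - 1) - 1 = 0)
    (c1 : ℝ) (hc1 : c1 ∈ Set.Ioo (-2 : ℝ) (-1))
    (hc1root : c1 ^ (2 * m) + c1 ^ (2 * m - 1) - 1 = 0)
    (c2 : ℝ) (hc2 : c2 ∈ Set.Ico (-2 : ℝ) c1)
    (hc2root : c2 ^ (2 * m) + c2 ^ (2 * m - 1) - 2 = 0) :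
    (∀ k ∈ Set.Ioo c2 (-1 : ℝ),
      1 < |deriv (fun t : ℝ => (1 - t ^ (2 * m - 1)) / (1 - t ^ (2 * m))) k|) ∧
    (1 < m → ∀ k ∈ Set.Ioo c2 (-1 : ℝ),
      1 + 1 / ((2 : ℝ) ^ (2 * m) - 1) ^ 2 <
        |deriv (fun t : ℝ => (1 - t ^ (2 * m - 1)) / (1 - t ^ (2 * m))) k|) ∧
    (∀ k : ℕ → ℝ,
      (∀ n, k (n + 1) = (1 - (k n) ^ (2 * m - 1)) / (1 - (k n) ^ (2 * m))) →
      k 0 ≠ c0 → k 0 ≠ c1 →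
      ∃ ℓ : ℕ, k ℓ ∉ Set.Ioo c2 c1 ∪ Set.Ioo c1 (-1 : ℝ)) := by
  have hm1 : (1:ℝ) ≤ (m:ℝ) := by exact_mod_cast hm
  have hQpos : (0:ℝ) < ((2:ℝ)^(2*m) - 1)^2 := by
    have : (2:ℝ)^(2*m) ≥ 2^1 := pow_le_pow_right₀ (by norm_num) (by omega)
    nlinarith
  have hnn : (0:ℝ) ≤ (4*(m:ℝ) - 4) / ((2:ℝ)^(2*m) - 1)^2 :=
    div_nonneg (by linarith) hQpos.le
  refine ⟨?_, ?_, ?_⟩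
  · intro k hk
    have := deriv_lower_aux m hm c2 hc2.1 hc2root k hk
    linarith
  · intro hm2 k hk
    have hlow := deriv_lower_aux m hm c2 hc2.1 hc2root k hk
    have hm2' : (2:ℝ) ≤ (m:ℝ) := by exact_mod_cast hm2
    have : 1 / ((2:ℝ)^(2*m) - 1)^2 ≤ (4*(m:ℝ) - 4) / ((2:ℝ)^(2*m) - 1)^2 :=
      (div_le_div_iff_of_pos_right hQpos).mpr (by linarith)
    linarith
  · intro k hrec hk0c0 hk0c1
    by_contra hcon
    push_neg at hcon
    have hmem : ∀ n, k n ∈ Ioo c2 (-1:ℝ) := by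
      intro n
      rcases hcon n with h | h
      · exact ⟨h.1, h.2.trans hc1.2⟩
      · exact ⟨hc2.2.trans h.1, h.2⟩
    have hne : ∀ n, k n ≠ c1 := by
      intro n
      rcases hcon n with h | h
      · exact ne_of_lt h.2
      · exact ne_of_gt h.1
    have hc1mem : c1 ∈ Ioo c2 (-1:ℝ) := ⟨hc2.2, hc1.2⟩
    have hd0pos : 0 < |k 0 - c1| := abs_pos.mpr (sub_ne_zero.mpr hk0c1)
    have hbdd : ∀ n, |k n - c1| ≤ 2 := by
      intro n
      have h1 := (hmem n).1
      have h2 := (hmem n).2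
      rw [abs_le]
      constructor <;> [skip; skip] <;>
        · have := hc2.1; have := hc1.1; have := hc1.2; linarith
    rcases eq_or_lt_of_le hm with hmeq | hmge
    · -- m = 1 : Möbius argument
      have hm' : m = 1 := hmeq.symm
      subst hm'
      norm_num at hrec hc0root hc1root
      have hc0q : c0^2 + c0 - 1 = 0 := by linarith [hc0root]
      have hc1q : c1^2 + c1 - 1 = 0 := by linarith [hc1root]
      have hc0pos : 0 < c0 := hc0.1
      have hstep : ∀ n, k (n+1) = 1/(1 + k n) := by
        intro n
        have hx2 := (hmem n).2
        have h2ne : (1:ℝ) - (k n)^2 ≠ 0 := ne_of_lt (by nlinarith)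
        have h1ne : (1:ℝ) + k n ≠ 0 := ne_of_lt (by linarith)
        rw [hrec n, div_eq_div_iff h2ne h1ne]
        ring
      have hu : ∀ n, (k (n+1) - c1)/(k (n+1) - c0) = (c1/c0) * ((k n - c1)/(k n - c0)) := by
        intro n
        have hx2 := (hmem n).2
        have hy2 := (hmem (n+1)).2
        have h1ne : (1:ℝ) + k n ≠ 0 := ne_of_lt (by linarith)
        refine mobius_u_aux c0 c1 _ _ hc0q hc1q h1ne ?_ ?_ ?_ (ne_of_gt hc0pos)
        · rw [hstep n]; field_simp
        · exact sub_ne_zero.mpr (ne_of_lt (by linarith [hc0.1]))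
        · exact sub_ne_zero.mpr (ne_of_lt (by linarith [hc0.1]))
      set μ : ℝ := (-c1)/c0 with hμdef
      have hμ1 : 1 < μ := by
        rw [hμdef, lt_div_iff₀ hc0pos]
        have := hc1.2; have := hc0.2; linarith
      have habs : ∀ n, |(k n - c1)/(k n - c0)| = μ^n * |(k 0 - c1)/(k 0 - c0)| := by
        intro n
        induction n with
        | zero => simp
        | succ n ih =>
          rw [hu n, abs_mul, ih, pow_succ]
          have : |c1/c0| = μ := by
            rw [hμdef, abs_div, abs_of_pos hc0pos, abs_of_neg (show c1 < 0 by linarith [hc1.2])]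
          rw [this]; ring
      have hub : ∀ n, |(k n - c1)/(k n - c0)| < 1 := by
        intro n
        have h1 := (hmem n).1
        have h2 := (hmem n).2
        rw [abs_div, div_lt_one (by rw [abs_pos]; intro h; nlinarith [hc0.1])]
        rw [abs_of_neg (show k n - c0 < 0 by nlinarith [hc0.1])]
        rw [abs_lt]
        constructor <;> · have := hc2.1; have := hc1.1; have := hc1.2; have := hc0.1; linarith
      have hu0pos : 0 < |(k 0 - c1)/(k 0 - c0)| := by
        rw [abs_pos]
        apply div_ne_zero (sub_ne_zero.mpr hk0c1) (sub_ne_zero.mpr hk0c0)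
      obtain ⟨n, hn⟩ := pow_unbounded_of_one_lt (1/|(k 0 - c1)/(k 0 - c0)|) hμ1
      have := habs n
      have := hub n
      rw [div_lt_iff₀ hu0pos] at hn
      nlinarith [habs n, hub n]
    · -- m ≥ 2 : uniform expansion
      set lam : ℝ := 1 + (4*(m:ℝ)-4)/((2:ℝ)^(2*m)-1)^2 with hlamdef
      have hm2' : (2:ℝ) ≤ (m:ℝ) := by exact_mod_cast hmge
      have hlam1 : 1 < lam := by
        rw [hlamdef]
        have : 0 < (4*(m:ℝ) - 4) / ((2:ℝ)^(2*m) - 1)^2 :=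
          div_pos (by linarith) hQpos
        linarith
      have hstep : ∀ n, lam * |k n - c1| ≤ |k (n+1) - c1| := by
        intro n
        have := mvt_step_aux m hm c2 c1 hc2.1 hc2root hc1mem hc1root (k n) (hmem n) (hne n)
        rw [← hrec n] at this
        exact this
      have hgrow : ∀ n, lam^n * |k 0 - c1| ≤ |k n - c1| := by
        intro n
        induction n with
        | zero => simp
        | succ n ih =>
          calc lam^(n+1) * |k 0 - c1| = lam * (lam^n * |k 0 - c1|) := by ring
            _ ≤ lam * |k n - c1| :=
              mul_le_mul_of_nonneg_left ih (by linarith)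
            _ ≤ |k (n+1) - c1| := hstep n
      obtain ⟨n, hn⟩ := pow_unbounded_of_one_lt (2/|k 0 - c1|) hlam1
      rw [div_lt_iff₀ hd0pos] at hn
      nlinarith [hgrow n, hbdd n]
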